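/- Let A be an abelian category with enough injectives and let (Q, W, R) be a Hovey triple which is hereditary (both cotorsion pairs (Q, W ∩ R) and (Q ∩ W, R) are hereditary) and weak injective (Q ∩ W ∩ R equals the class of injective objects of A). Then (Q ∩ W, R) and (Q, W ∩ R) are injective cotorsion pairs; that is, Q ∩ W is thick with (Q ∩ W) ∩ R the class of injective objects, and Q is thick with Q ∩ (W ∩ R) the class of injective objects. -/
import Mathlib


open CategoryTheory CategoryTheory.Limits

universe w v u

variable {A : Type u} [Category.{v} A] [Abelian A]

/-- `IsShortExact i p` asserts that `0 → X → Y → Z → 0` is a short exact sequence. -/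
def IsShortExact {X Y Z : A} (i : X ⟶ Y) (p : Y ⟶ Z) : Prop :=
  ∃ w : i ≫ p = 0, (ShortComplex.mk i p w).ShortExact

section Ext

variable [HasExt.{w} A]

/-- `Ext¹(X, Y) = 0`. -/
def Ext1Zero (X Y : A) : Prop := Subsingleton (Abelian.Ext X Y 1)

/-- `(F, C)` is a cotorsion pair: each class is the `Ext¹`-orthogonal of the other. -/
def IsCotorsionPair (F C : Set A) : Prop :=
  (∀ X : A, X ∈ F ↔ ∀ Y ∈ C, Ext1Zero.{w} X Y) ∧
  (∀ Y : A, Y ∈ C ↔ ∀ X ∈ F, Ext1Zero.{w} X Y)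

/-- A complete cotorsion pair: for every object `X` there are short exact sequences
`0 → C → F → X → 0` and `0 → X → C' → F' → 0` with `F, F'` in the left class and
`C, C'` in the right class. -/
def IsCompleteCotorsionPair (F C : Set A) : Prop :=
  IsCotorsionPair.{w} F C ∧
  (∀ X : A, ∃ (Co Fo : A) (i : Co ⟶ Fo) (p : Fo ⟶ X),
    Co ∈ C ∧ Fo ∈ F ∧ IsShortExact i p) ∧
  (∀ X : A, ∃ (Co Fo : A) (i : X ⟶ Co) (p : Co ⟶ Fo),
    Co ∈ C ∧ Fo ∈ F ∧ IsShortExact i p)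

end Ext

/-- A thick class: closed under direct summands (retracts) and satisfying two-out-of-three
for short exact sequences. -/
def IsThickClass (W : Set A) : Prop :=
  (∀ (X Y : A) (s : Y ⟶ X) (r : X ⟶ Y), s ≫ r = 𝟙 Y → X ∈ W → Y ∈ W) ∧
  (∀ ⦃X Y Z : A⦄ (i : X ⟶ Y) (p : Y ⟶ Z), IsShortExact i p →
    (X ∈ W → Y ∈ W → Z ∈ W) ∧ (X ∈ W → Z ∈ W → Y ∈ W) ∧ (Y ∈ W → Z ∈ W → X ∈ W))

/-- The class `F` is closed under kernels of epimorphisms between objects of `F`. -/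
def ClosedUnderKernelsOfEpis (F : Set A) : Prop :=
  ∀ ⦃X Y Z : A⦄ (i : X ⟶ Y) (p : Y ⟶ Z), IsShortExact i p → Y ∈ F → Z ∈ F → X ∈ F

/-- The class `C` is closed under cokernels of monomorphisms between objects of `C`. -/
def ClosedUnderCokernelsOfMonos (C : Set A) : Prop :=
  ∀ ⦃X Y Z : A⦄ (i : X ⟶ Y) (p : Y ⟶ Z), IsShortExact i p → X ∈ C → Y ∈ C → Z ∈ C

/-- An injective cotorsion pair: a complete cotorsion pair `(W, F)` with `W` thick and
`W ∩ F` equal to the class of injective objects. -/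
def IsInjectiveCotorsionPair [HasExt.{w} A] (W F : Set A) : Prop :=
  IsCompleteCotorsionPair.{w} W F ∧ IsThickClass W ∧
  ∀ X : A, (X ∈ W ∧ X ∈ F) ↔ Injective X

/-- A projective cotorsion pair: a complete cotorsion pair `(C, W)` with `W` thick and
`C ∩ W` equal to the class of projective objects. -/
def IsProjectiveCotorsionPair [HasExt.{w} A] (C W : Set A) : Prop :=
  IsCompleteCotorsionPair.{w} C W ∧ IsThickClass W ∧
  ∀ X : A, (X ∈ C ∧ X ∈ W) ↔ Projective X

/-- A Hovey triple `(Q, W, R)`: `W` is thick and both `(Q, W ∩ R)` and `(Q ∩ W, R)` are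
complete cotorsion pairs. -/
def IsHoveyTriple [HasExt.{w} A] (Q W R : Set A) : Prop :=
  IsThickClass W ∧ IsCompleteCotorsionPair.{w} Q (W ∩ R) ∧
    IsCompleteCotorsionPair.{w} (Q ∩ W) R

section AuxLemmas

open CategoryTheory.Abelian

variable [HasExt.{w} A]

lemma Ext1Zero.of_forall_eq_zero {X Y : A} (h : ∀ x : Abelian.Ext X Y 1, x = 0) :
    Ext1Zero.{w} X Y :=
  ⟨fun a b => by rw [h a, h b]⟩

lemma eq_zero_of_ext1Zero {X Y : A} (h : Ext1Zero.{w} X Y) (x : Abelian.Ext X Y 1) :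
    x = 0 := by
  letI : Subsingleton (Abelian.Ext X Y 1) := h
  exact Subsingleton.elim x 0

/-- The left class of a cotorsion pair is closed under retracts. -/
lemma left_mem_of_retract {F C : Set A} (hcp : IsCotorsionPair.{w} F C)
    {X Y : A} (s : Y ⟶ X) (r : X ⟶ Y) (hsr : s ≫ r = 𝟙 Y) (hX : X ∈ F) : Y ∈ F := by
  rw [hcp.1 Y]
  intro c hc
  apply Ext1Zero.of_forall_eq_zero
  intro e
  have h0 : (Ext.mk₀ r).comp e (zero_add 1) = 0 :=
    eq_zero_of_ext1Zero ((hcp.1 X).1 hX c hc) _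
  calc e = (Ext.mk₀ (𝟙 Y)).comp e (zero_add 1) := (Ext.mk₀_id_comp e).symm
    _ = (Ext.mk₀ (s ≫ r)).comp e (zero_add 1) := by rw [hsr]
    _ = (Ext.mk₀ s).comp ((Ext.mk₀ r).comp e (zero_add 1)) (zero_add 1) :=
        (Ext.mk₀_comp_mk₀_assoc s r e).symm
    _ = 0 := by rw [h0, Ext.comp_zero]

/-- The left class of a cotorsion pair is closed under extensions. -/
lemma left_mem_of_extension {F C : Set A} (hcp : IsCotorsionPair.{w} F C)
    {X Y Z : A} {i : X ⟶ Y} {p : Y ⟶ Z} (hse : IsShortExact i p)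
    (hX : X ∈ F) (hZ : Z ∈ F) : Y ∈ F := by
  obtain ⟨w0, hS⟩ := hse
  rw [hcp.1 Y]
  intro c hc
  apply Ext1Zero.of_forall_eq_zero
  intro e
  have h1 : (Ext.mk₀ (ShortComplex.mk i p w0).f).comp e (zero_add 1) = 0 :=
    eq_zero_of_ext1Zero ((hcp.1 X).1 hX c hc) _
  obtain ⟨e', he'⟩ := Ext.contravariant_sequence_exact₂ hS c e h1
  rw [← he', eq_zero_of_ext1Zero ((hcp.1 Z).1 hZ c hc) e', Ext.comp_zero]

/-- The left class of a complete cotorsion pair whose "core" consists of injective objects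
is closed under cokernels of monomorphisms. -/
lemma left_mem_of_cokernel {F C : Set A} (hcp : IsCompleteCotorsionPair.{w} F C)
    (hinj : ∀ T : A, T ∈ F → T ∈ C → Injective T)
    {X Y Z : A} {i : X ⟶ Y} {p : Y ⟶ Z} (hse : IsShortExact i p)
    (hX : X ∈ F) (hY : Y ∈ F) : Z ∈ F := by
  obtain ⟨w0, hS⟩ := hse
  rw [hcp.1.1 Z]
  intro c hc
  apply Ext1Zero.of_forall_eq_zero
  intro x
  -- Step 1: `x` comes from some `x₁ : Ext X c 0` via the connecting map,
  -- since `Ext¹(Y, c) = 0`.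
  have h1 : (Ext.mk₀ (ShortComplex.mk i p w0).g).comp x (zero_add 1) = 0 :=
    eq_zero_of_ext1Zero ((hcp.1.1 Y).1 hY c hc) _
  obtain ⟨x₁, hx₁⟩ := Ext.contravariant_sequence_exact₃ hS c x h1 (show 1 + 0 = 1 by rfl)
  -- Step 2: special approximation `0 → X → Co → Fo → 0` with `Co ∈ C`, `Fo ∈ F`.
  obtain ⟨Co, Fo, f', p', hCo, hFo, hU⟩ := hcp.2.2 X
  obtain ⟨w1, hU'⟩ := hU
  have hCoF : Co ∈ F := left_mem_of_extension hcp.1 ⟨w1, hU'⟩ hX hFo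
  have hCoInj : Injective Co := hinj Co hCoF hCo
  -- Step 3: `x₁` lifts to `y : Ext Co c 0` since `Ext¹(Fo, c) = 0`.
  have h2 : hU'.extClass.comp x₁ (show 1 + 0 = 1 by rfl) = 0 :=
    eq_zero_of_ext1Zero ((hcp.1.1 Fo).1 hFo c hc) _
  obtain ⟨y, hy⟩ := Ext.contravariant_sequence_exact₁ hU' c x₁ (show 1 + 0 = 1 by rfl) h2
  -- Step 4: `Co` is injective, so `f' : X ⟶ Co` extends along the mono `i`.
  haveI : Mono i := hS.mono_f
  haveI := hCoInj
  have hfac : i ≫ Injective.factorThru f' i = f' := Injective.comp_factorThru f' i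
  have hy' : (Ext.mk₀ f').comp y (zero_add 0) = x₁ := hy
  calc x = hS.extClass.comp x₁ (show 1 + 0 = 1 by rfl) := hx₁.symm
    _ = hS.extClass.comp ((Ext.mk₀ (i ≫ Injective.factorThru f' i)).comp y (zero_add 0))
          (show 1 + 0 = 1 by rfl) := by rw [hfac, hy']
    _ = hS.extClass.comp ((Ext.mk₀ i).comp
          ((Ext.mk₀ (Injective.factorThru f' i)).comp y (zero_add 0)) (zero_add 0))
          (show 1 + 0 = 1 by rfl) := by rw [Ext.mk₀_comp_mk₀_assoc]
    _ = 0 := hS.extClass_comp_assoc _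

end AuxLemmas

theorem weak_injective_hereditary_converse [EnoughInjectives A] [HasExt.{w} A]
    (Q W R : Set A) (h : IsHoveyTriple.{w} Q W R)
    (hher1 : ClosedUnderKernelsOfEpis Q ∧ ClosedUnderCokernelsOfMonos (W ∩ R))
    (hher2 : ClosedUnderKernelsOfEpis (Q ∩ W) ∧ ClosedUnderCokernelsOfMonos R)
    (hweak : ∀ X : A, (X ∈ Q ∧ X ∈ W ∧ X ∈ R) ↔ Injective X) :
    IsInjectiveCotorsionPair.{w} (Q ∩ W) R ∧ IsInjectiveCotorsionPair.{w} Q (W ∩ R) := by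
  obtain ⟨hWthick, hcp1, hcp2⟩ := h
  have hinj1 : ∀ T : A, T ∈ Q → T ∈ W ∩ R → Injective T :=
    fun T hq hwr => (hweak T).1 ⟨hq, hwr.1, hwr.2⟩
  have hcoker : ∀ ⦃X Y Z : A⦄ (i : X ⟶ Y) (p : Y ⟶ Z), IsShortExact i p →
      X ∈ Q → Y ∈ Q → Z ∈ Q :=
    fun X Y Z i p hse hX hY => left_mem_of_cokernel hcp1 hinj1 hse hX hY
  refine ⟨⟨hcp2, ⟨?_, ?_⟩, ?_⟩, ⟨hcp1, ⟨?_, ?_⟩, ?_⟩⟩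
  · intro X Y s r hsr hX
    exact left_mem_of_retract hcp2.1 s r hsr hX
  · intro X Y Z i p hse
    exact ⟨fun hX hY => ⟨hcoker i p hse hX.1 hY.1, (hWthick.2 i p hse).1 hX.2 hY.2⟩,
      fun hX hZ => left_mem_of_extension hcp2.1 hse hX hZ,
      fun hY hZ => hher2.1 i p hse hY hZ⟩
  · intro X
    constructor
    · rintro ⟨⟨hq, hw⟩, hr⟩
      exact (hweak X).1 ⟨hq, hw, hr⟩
    · intro hX
      obtain ⟨hq, hw, hr⟩ := (hweak X).2 hX
      exact ⟨⟨hq, hw⟩, hr⟩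
  · intro X Y s r hsr hX
    exact left_mem_of_retract hcp1.1 s r hsr hX
  · intro X Y Z i p hse
    exact ⟨fun hX hY => hcoker i p hse hX hY,
      fun hX hZ => left_mem_of_extension hcp1.1 hse hX hZ,
      fun hY hZ => hher1.1 i p hse hY hZ⟩
  · intro X
    constructor
    · rintro ⟨hq, hw, hr⟩
      exact (hweak X).1 ⟨hq, hw, hr⟩
    · intro hX
      obtain ⟨hq, hw, hr⟩ := (hweak X).2 hX
      exact ⟨hq, hw, hr⟩
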